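/- Let B = K + M be an integral domain, where K is a field contained in B and M is a nonzero maximal ideal of B. If A is a subring of B containing M, then B is well-centered on A. -/
import Mathlib


theorem stmt12 {B : Type*} [CommRing B] [IsDomain B] (F : Subring B)
    (hF : ∀ x ∈ F, x ≠ 0 → ∃ y ∈ F, x * y = 1)
    (M : Ideal B) (hM : M.IsMaximal) (hM0 : M ≠ ⊥)
    (hsum : ∀ b : B, ∃ k ∈ F, ∃ m ∈ M, b = k + m)
    (A : Subring B) (hMA : (M : Set B) ⊆ A) :
    ∀ b : B, ∃ v : Bˣ, (v : B) * b ∈ A := by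
  intro b
  obtain ⟨k, hk, m, hm, rfl⟩ := hsum b
  by_cases hk0 : k = 0
  · exact ⟨1, by simpa [hk0] using hMA hm⟩
  · obtain ⟨y, hy, hky⟩ := hF k hk hk0
    refine ⟨⟨y, k, by rw [mul_comm]; exact hky, hky⟩, ?_⟩
    have : y * (k + m) = 1 + y * m := by rw [mul_add, mul_comm y k, hky]
    rw [Units.val_mk, this]
    exact A.add_mem A.one_mem (hMA (M.mul_mem_left y hm))
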